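/- Let λ₁ ≤ λ₂ ≤ 0 ≤ λ₃ ≤ λ₄ ≤ λ₅ ≤ λ₆ be real numbers with λ₅ > 0, λ₁+⋯+λ₆ = 6H where H > 0, σ₂(λ) = 15R with R ≥ (3/5)H², σ₄(λ) ≥ 0, σ₅(λ) ≤ 0, and σ₆(λ) = λ₁⋯λ₆ ≥ 0. Then σ₃(λ) ≥ 0. -/

import Mathlib

/-- the `r`-th elementary symmetric function -/
def esym {n : ℕ} (x : Fin n → ℝ) (r : ℕ) : ℝ :=
  ∑ t ∈ (Finset.univ : Finset (Fin n)).powersetCard r, ∏ i ∈ t, x i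

lemma esym2_eval (x : Fin 6 → ℝ) : esym x 2 = x 0*x 1 + x 0*x 2 + x 0*x 3 + x 0*x 4 + x 0*x 5 + x 1*x 2 + x 1*x 3 + x 1*x 4 + x 1*x 5 + x 2*x 3 + x 2*x 4 + x 2*x 5 + x 3*x 4 + x 3*x 5 + x 4*x 5 := by
  rw [esym, show (Finset.univ : Finset (Fin 6)).powersetCard 2 = {({0,1} : Finset (Fin 6)), ({0,2} : Finset (Fin 6)), ({0,3} : Finset (Fin 6)), ({0,4} : Finset (Fin 6)), ({0,5} : Finset (Fin 6)), ({1,2} : Finset (Fin 6)), ({1,3} : Finset (Fin 6)), ({1,4} : Finset (Fin 6)), ({1,5} : Finset (Fin 6)), ({2,3} : Finset (Fin 6)), ({2,4} : Finset (Fin 6)), ({2,5} : Finset (Fin 6)), ({3,4} : Finset (Fin 6)), ({3,5} : Finset (Fin 6)), ({4,5} : Finset (Fin 6))} from by decide]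
  simp (config := { decide := true }) [Finset.sum_insert, Finset.prod_insert]
  ring

lemma esym3_eval (x : Fin 6 → ℝ) : esym x 3 = x 0*x 1*x 2 + x 0*x 1*x 3 + x 0*x 1*x 4 + x 0*x 1*x 5 + x 0*x 2*x 3 + x 0*x 2*x 4 + x 0*x 2*x 5 + x 0*x 3*x 4 + x 0*x 3*x 5 + x 0*x 4*x 5 + x 1*x 2*x 3 + x 1*x 2*x 4 + x 1*x 2*x 5 + x 1*x 3*x 4 + x 1*x 3*x 5 + x 1*x 4*x 5 + x 2*x 3*x 4 + x 2*x 3*x 5 + x 2*x 4*x 5 + x 3*x 4*x 5 := by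
  rw [esym, show (Finset.univ : Finset (Fin 6)).powersetCard 3 = {({0,1,2} : Finset (Fin 6)), ({0,1,3} : Finset (Fin 6)), ({0,1,4} : Finset (Fin 6)), ({0,1,5} : Finset (Fin 6)), ({0,2,3} : Finset (Fin 6)), ({0,2,4} : Finset (Fin 6)), ({0,2,5} : Finset (Fin 6)), ({0,3,4} : Finset (Fin 6)), ({0,3,5} : Finset (Fin 6)), ({0,4,5} : Finset (Fin 6)), ({1,2,3} : Finset (Fin 6)), ({1,2,4} : Finset (Fin 6)), ({1,2,5} : Finset (Fin 6)), ({1,3,4} : Finset (Fin 6)), ({1,3,5} : Finset (Fin 6)), ({1,4,5} : Finset (Fin 6)), ({2,3,4} : Finset (Fin 6)), ({2,3,5} : Finset (Fin 6)), ({2,4,5} : Finset (Fin 6)), ({3,4,5} : Finset (Fin 6))} from by decide]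
  simp (config := { decide := true }) [Finset.sum_insert, Finset.prod_insert]
  ring

lemma esym4_eval (x : Fin 6 → ℝ) : esym x 4 = x 0*x 1*x 2*x 3 + x 0*x 1*x 2*x 4 + x 0*x 1*x 2*x 5 + x 0*x 1*x 3*x 4 + x 0*x 1*x 3*x 5 + x 0*x 1*x 4*x 5 + x 0*x 2*x 3*x 4 + x 0*x 2*x 3*x 5 + x 0*x 2*x 4*x 5 + x 0*x 3*x 4*x 5 + x 1*x 2*x 3*x 4 + x 1*x 2*x 3*x 5 + x 1*x 2*x 4*x 5 + x 1*x 3*x 4*x 5 + x 2*x 3*x 4*x 5 := by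
  rw [esym, show (Finset.univ : Finset (Fin 6)).powersetCard 4 = {({0,1,2,3} : Finset (Fin 6)), ({0,1,2,4} : Finset (Fin 6)), ({0,1,2,5} : Finset (Fin 6)), ({0,1,3,4} : Finset (Fin 6)), ({0,1,3,5} : Finset (Fin 6)), ({0,1,4,5} : Finset (Fin 6)), ({0,2,3,4} : Finset (Fin 6)), ({0,2,3,5} : Finset (Fin 6)), ({0,2,4,5} : Finset (Fin 6)), ({0,3,4,5} : Finset (Fin 6)), ({1,2,3,4} : Finset (Fin 6)), ({1,2,3,5} : Finset (Fin 6)), ({1,2,4,5} : Finset (Fin 6)), ({1,3,4,5} : Finset (Fin 6)), ({2,3,4,5} : Finset (Fin 6))} from by decide]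
  simp (config := { decide := true }) [Finset.sum_insert, Finset.prod_insert]
  ring

lemma esym5_eval (x : Fin 6 → ℝ) : esym x 5 = x 0*x 1*x 2*x 3*x 4 + x 0*x 1*x 2*x 3*x 5 + x 0*x 1*x 2*x 4*x 5 + x 0*x 1*x 3*x 4*x 5 + x 0*x 2*x 3*x 4*x 5 + x 1*x 2*x 3*x 4*x 5 := by
  rw [esym, show (Finset.univ : Finset (Fin 6)).powersetCard 5 = {({0,1,2,3,4} : Finset (Fin 6)), ({0,1,2,3,5} : Finset (Fin 6)), ({0,1,2,4,5} : Finset (Fin 6)), ({0,1,3,4,5} : Finset (Fin 6)), ({0,2,3,4,5} : Finset (Fin 6)), ({1,2,3,4,5} : Finset (Fin 6))} from by decide]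
  simp (config := { decide := true }) [Finset.sum_insert, Finset.prod_insert]
  ring

set_option maxHeartbeats 2000000 in
lemma key_ineq (u v a b c d H R : ℝ)
    (hu : u ≤ 0) (hv : v ≤ 0) (ha : 0 ≤ a) (hab : a ≤ b) (hbc : b ≤ c) (hcd : c ≤ d)
    (hc : 0 < c) (hH : 0 < H)
    (hsum : u + v + a + b + c + d = 6 * H)
    (hR : u*v + (u+v)*(a+b+c+d) + (a*b+a*c+a*d+b*c+b*d+c*d) = 15 * R)
    (hRge : 3/5 * H^2 ≤ R)
    (hσ4 : 0 ≤ u*v*(a*b+a*c+a*d+b*c+b*d+c*d) + (u+v)*(a*b*c+a*b*d+a*c*d+b*c*d) + a*b*c*d)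
    (hσ5 : u*v*(a*b*c+a*b*d+a*c*d+b*c*d) + (u+v)*(a*b*c*d) ≤ 0) :
    0 ≤ (a*b*c+a*b*d+a*c*d+b*c*d) + (u+v)*(a*b+a*c+a*d+b*c+b*d+c*d) + u*v*(a+b+c+d) := by
  have hb : 0 ≤ b := ha.trans hab
  have hc' : 0 ≤ c := hc.le
  have hd : 0 < d := hc.trans_le hcd
  have hd' : 0 ≤ d := hd.le
  have hp : 0 ≤ u * v := by nlinarith [mul_nonneg (neg_nonneg.mpr hu) (neg_nonneg.mpr hv)]
  have hs : u + v ≤ 0 := by linarith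
  have hB : 0 ≤ a*b+a*c+a*d+b*c+b*d+c*d := by
    have h1 := mul_nonneg ha hb; have h2 := mul_nonneg ha hc'
    have h3 := mul_nonneg ha hd'; have h4 := mul_nonneg hb hc'
    have h5 := mul_nonneg hb hd'; have h6 := mul_nonneg hc' hd'
    linarith
  have hCterms : 0 ≤ a*b*c ∧ 0 ≤ a*b*d ∧ 0 ≤ a*c*d ∧ 0 ≤ b*c*d :=
    ⟨mul_nonneg (mul_nonneg ha hb) hc', mul_nonneg (mul_nonneg ha hb) hd',
     mul_nonneg (mul_nonneg ha hc') hd', mul_nonneg (mul_nonneg hb hc') hd'⟩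
  obtain ⟨hC1, hC2, hC3, hC4⟩ := hCterms
  have hC : 0 ≤ a*b*c+a*b*d+a*c*d+b*c*d := by linarith
  have hD : 0 ≤ a*b*c*d := mul_nonneg (mul_nonneg (mul_nonneg ha hb) hc') hd'
  -- Newton's inequality: 3 C^2 ≥ 8 B D (an exact sum-of-squares identity)
  have hNewton : 8*(a*b+a*c+a*d+b*c+b*d+c*d)*(a*b*c*d) ≤ 3*(a*b*c+a*b*d+a*c*d+b*c*d)^2 := by
    nlinarith [sq_nonneg (a*b*(c-d)), sq_nonneg (a*c*(b-d)), sq_nonneg (a*d*(b-c)),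
      sq_nonneg (b*c*(a-d)), sq_nonneg (b*d*(a-c)), sq_nonneg (c*d*(a-b))]
  rcases hC.eq_or_lt with hC0 | hCpos
  · -- C = 0 : then b*c*d = 0, so a = b = 0
    have hbcd : b*c*d = 0 := by linarith
    have hb0 : b = 0 := by
      rcases mul_eq_zero.mp hbcd with h | h
      · rcases mul_eq_zero.mp h with h' | h'
        · exact h'
        · exact absurd h' hc.ne'
      · exact absurd h hd.ne'
    have ha0 : a = 0 := le_antisymm (hb0 ▸ hab) ha
    subst hb0; subst ha0
    have hs0 : 0 ≤ u + v := by nlinarith [sq_nonneg (u-v), sq_nonneg (c-d)]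
    have hseq : u + v = 0 := le_antisymm hs hs0
    have hsq : (u+v)^2 = 0 := by rw [hseq]; ring
    have hp0 : u * v = 0 := le_antisymm (by linarith [sq_nonneg (u-v), hsq]) hp
    have e1 : (u+v)*(0*0+0*c+0*d+0*c+0*d+c*d) = 0 := by rw [hseq]; ring
    have e2 : u*v*(0+0+c+d) = 0 := by rw [hp0]; ring
    linarith [e1, e2]
  · -- C > 0
    have hs4 : (-(u+v))*(a*b*c+a*b*d+a*c*d+b*c*d) ≤ a*b*c*d + u*v*(a*b+a*c+a*d+b*c+b*d+c*d) := by
      linarith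
    have hs5 : u*v*(a*b*c+a*b*d+a*c*d+b*c*d) ≤ (-(u+v))*(a*b*c*d) := by linarith
    have hsn : 0 ≤ -(u+v) := by linarith
    -- multiply hs4 by B
    have m1 : (-(u+v))*(a*b*c+a*b*d+a*c*d+b*c*d)*(a*b+a*c+a*d+b*c+b*d+c*d)
        ≤ (a*b*c*d + u*v*(a*b+a*c+a*d+b*c+b*d+c*d))*(a*b+a*c+a*d+b*c+b*d+c*d) :=
      mul_le_mul_of_nonneg_right hs4 hB
    -- multiply hs5 by B and use Newton
    have m2 : u*v*(a*b*c+a*b*d+a*c*d+b*c*d)*(a*b+a*c+a*d+b*c+b*d+c*d)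
        ≤ (-(u+v))*(a*b*c*d)*(a*b+a*c+a*d+b*c+b*d+c*d) :=
      mul_le_mul_of_nonneg_right hs5 hB
    have m2' : u*v*(a*b+a*c+a*d+b*c+b*d+c*d)*(a*b*c+a*b*d+a*c*d+b*c*d)
        ≤ 3/8*(-(u+v))*(a*b*c+a*b*d+a*c*d+b*c*d)^2 := by
      linarith [m2, mul_le_mul_of_nonneg_left hNewton hsn]
    -- divide by C : p*B ≤ 3/8 * (-s) * C
    have m3 : u*v*(a*b+a*c+a*d+b*c+b*d+c*d) ≤ 3/8*(-(u+v))*(a*b*c+a*b*d+a*c*d+b*c*d) := by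
      have := le_of_mul_le_mul_right
        (by linarith [m2'] :
          (u*v*(a*b+a*c+a*d+b*c+b*d+c*d))*(a*b*c+a*b*d+a*c*d+b*c*d)
          ≤ (3/8*(-(u+v))*(a*b*c+a*b*d+a*c*d+b*c*d))*(a*b*c+a*b*d+a*c*d+b*c*d)) hCpos
      exact this
    have m4 : u*v*(a*b+a*c+a*d+b*c+b*d+c*d)*(a*b+a*c+a*d+b*c+b*d+c*d)
        ≤ 3/8*(-(u+v))*(a*b*c+a*b*d+a*c*d+b*c*d)*(a*b+a*c+a*d+b*c+b*d+c*d) :=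
      mul_le_mul_of_nonneg_right m3 hB
    -- conclude (-s) * B ≤ 3/5 * C
    have m5 : (-(u+v))*(a*b+a*c+a*d+b*c+b*d+c*d) ≤ 3/5*(a*b*c+a*b*d+a*c*d+b*c*d) := by
      have := le_of_mul_le_mul_right
        (by linarith [m1, m4, hNewton] :
          ((-(u+v))*(a*b+a*c+a*d+b*c+b*d+c*d))*(a*b*c+a*b*d+a*c*d+b*c*d)
          ≤ (3/5*(a*b*c+a*b*d+a*c*d+b*c*d))*(a*b*c+a*b*d+a*c*d+b*c*d)) hCpos
      exact this
    have hA : 0 ≤ a+b+c+d := by linarith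
    have hpA : 0 ≤ u*v*(a+b+c+d) := mul_nonneg hp hA
    nlinarith [m5, hpA, hCpos]

theorem stmt_16 (l : Fin 6 → ℝ) (H R : ℝ)
    (h01 : l 0 ≤ l 1) (h1 : l 1 ≤ 0) (h2 : 0 ≤ l 2)
    (h23 : l 2 ≤ l 3) (h34 : l 3 ≤ l 4) (h45 : l 4 ≤ l 5) (h4pos : 0 < l 4)
    (hH : 0 < H) (hsum : ∑ i, l i = 6 * H)
    (hR : esym l 2 = 15 * R) (hRge : (3 / 5) * H ^ 2 ≤ R)
    (hσ4 : 0 ≤ esym l 4) (hσ5 : esym l 5 ≤ 0)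
    (hσ6 : 0 ≤ l 0 * l 1 * l 2 * l 3 * l 4 * l 5) :
    0 ≤ esym l 3 := by
  rw [Fin.sum_univ_six] at hsum
  rw [esym2_eval] at hR
  rw [esym4_eval] at hσ4
  rw [esym5_eval] at hσ5
  rw [esym3_eval]
  have := key_ineq (l 0) (l 1) (l 2) (l 3) (l 4) (l 5) H R
    (h01.trans h1) h1 h2 h23 h34 h45 h4pos hH
    (by linarith) (by linarith [hR]) (by linarith [hRge])
    (by linarith [hσ4]) (by linarith [hσ5])
  linarith [this]
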